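/- Let r₁ = R₁/2, r₂ = R₂/2 and let D₂ be the pole, with respect to the circle (O₂, R₂), of the tangent line from O₁ to the sibling circle (S₂) of diameter [O₂M]. Then O₂D₂ = 2r₂(2r₁+r₂)/(r₁+r₂) and O₂D₂ - R₂ = 2r₁r₂/(r₁+r₂) = R₁R₂/(R₁+R₂). -/

import Mathlib

open scoped RealInnerProductSpace

set_option maxHeartbeats 2000000 in
/-- **The pole `D₂` of the tangent from `O₁` to the sibling circle.**
Arbelos with `O₁ = (R₁,0)`, `M = (2R₁,0)`, `O₂ = (2R₁+R₂,0)`; the sibling circle `(S₂)`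
has diameter `[O₂M]`, center `S₂ = midpoint(O₂, M)` and radius `R₂/2`.  Let `t` be a line
through `O₁` tangent to `(S₂)` (tangency point `T`, unit direction `v`), let `P₂` be the
orthogonal projection of `O₂` onto `t`, and let `D₂` be the inverse of `P₂` in `(O₂, R₂)`
(the pole of `t`), so `D₂` lies on the ray from `O₂` through `P₂` and
`O₂P₂ · O₂D₂ = R₂²`.  Then, with `r₁ = R₁/2`, `r₂ = R₂/2`,
`O₂D₂ = 2r₂(2r₁+r₂)/(r₁+r₂)` and `O₂D₂ - R₂ = 2r₁r₂/(r₁+r₂) = R₁R₂/(R₁+R₂)`. -/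
theorem pole_of_tangent_to_sibling (R₁ R₂ : ℝ) (hR₁ : 0 < R₁) (hR₂ : 0 < R₂)
    (O₁ M O₂ S₂ T v P₂ D₂ : EuclideanSpace ℝ (Fin 2))
    (hO₁ : O₁ = ![R₁, 0]) (hM : M = ![2 * R₁, 0]) (hO₂ : O₂ = ![2 * R₁ + R₂, 0])
    (hS₂ : S₂ = midpoint ℝ O₂ M)
    (hv : ‖v‖ = 1)
    (hT : dist T S₂ = R₂ / 2)            -- `T` is on the sibling circle
    (hperpT : ⟪T - S₂, v⟫ = 0)           -- `t` is tangent to `(S₂)` at `T`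
    (hO₁mem : ∃ s : ℝ, O₁ = T + s • v)   -- `t` passes through `O₁`
    (hP₂mem : ∃ s : ℝ, P₂ = T + s • v)   -- `P₂` lies on `t`
    (hP₂perp : ⟪P₂ - O₂, v⟫ = 0)         -- `P₂` is the projection of `O₂` on `t`
    (hD₂ray : ∃ c : ℝ, 0 ≤ c ∧ D₂ = O₂ + c • (P₂ - O₂))
    (hD₂inv : dist O₂ P₂ * dist O₂ D₂ = R₂ ^ 2) :
    dist O₂ D₂ = 2 * (R₂ / 2) * (2 * (R₁ / 2) + R₂ / 2) / (R₁ / 2 + R₂ / 2) ∧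
      dist O₂ D₂ - R₂ = R₁ * R₂ / (R₁ + R₂) := by
  obtain ⟨s₁, hs₁⟩ := hO₁mem
  obtain ⟨s, hs⟩ := hP₂mem
  set a : ℝ := R₁ + R₂ / 2 with ha
  set b : ℝ := R₂ / 2 with hb
  have ha0 : 0 < a := by rw [ha, hb]; linarith
  have hb0 : 0 < b := by rw [hb]; linarith
  have hane : a ≠ 0 := ne_of_gt ha0
  have hS₂' : S₂ = ![2 * R₁ + R₂ / 2, 0] := by
    rw [hS₂]
    ext i
    fin_cases i <;> (simp [midpoint_eq_smul_add, hM, hO₂]; try ring)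
  have hvv : ⟪v, v⟫ = 1 := by
    rw [real_inner_self_eq_norm_sq, hv]; norm_num
  have hvu : ⟪v, T - S₂⟫ = 0 := by rw [real_inner_comm]; exact hperpT
  have huu : ⟪T - S₂, T - S₂⟫ = b ^ 2 := by
    rw [real_inner_self_eq_norm_sq, ← dist_eq_norm, hT, hb]
  have hOS : ⟪O₁ - S₂, O₁ - S₂⟫ = a ^ 2 := by
    rw [PiLp.inner_apply]
    simp [Fin.sum_univ_two, hO₁, hS₂', ha, hb]
    ring
  have hcol : a • (S₂ - O₂) = b • (O₁ - S₂) := by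
    ext i
    fin_cases i <;> (simp [hO₁, hO₂, hS₂', ha, hb]; try ring)
  clear_value a b
  have hdecomp : O₁ - S₂ = (T - S₂) + s₁ • v := by
    rw [hs₁]; module
  have hOSu : ⟪O₁ - S₂, T - S₂⟫ = b ^ 2 := by
    rw [hdecomp, inner_add_left, real_inner_smul_left, hvu, huu]
    ring
  have hOSv : ⟪O₁ - S₂, v⟫ = s₁ := by
    rw [hdecomp, inner_add_left, real_inner_smul_left, hperpT, hvv]
    ring
  have hs₁sq : s₁ ^ 2 = a ^ 2 - b ^ 2 := by
    have h := hOS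
    rw [hdecomp] at h
    simp only [inner_add_add_self, real_inner_smul_left, real_inner_smul_right,
      hperpT, hvu, hvv, huu] at h
    nlinarith [h]
  have hdu : ⟪S₂ - O₂, T - S₂⟫ = b ^ 3 / a := by
    have h := congrArg (fun x => ⟪x, T - S₂⟫) hcol
    simp only [real_inner_smul_left] at h
    rw [hOSu] at h
    field_simp at h ⊢
    linarith [h]
  have hdv : ⟪S₂ - O₂, v⟫ = b * s₁ / a := by
    have h := congrArg (fun x => ⟪x, v⟫) hcol
    simp only [real_inner_smul_left] at h
    rw [hOSv] at h
    field_simp at h ⊢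
    linarith [h]
  have hdd : ⟪S₂ - O₂, S₂ - O₂⟫ = b ^ 2 := by
    have h : ⟪a • (S₂ - O₂), a • (S₂ - O₂)⟫ = ⟪b • (O₁ - S₂), b • (O₁ - S₂)⟫ := by rw [hcol]
    simp only [real_inner_smul_left, real_inner_smul_right] at h
    rw [hOS] at h
    have h2 : a ^ 2 * (⟪S₂ - O₂, S₂ - O₂⟫ - b ^ 2) = 0 := by nlinarith [h]
    have h3 : (a : ℝ) ^ 2 ≠ 0 := by positivity
    rcases mul_eq_zero.mp h2 with h4 | h4
    · exact absurd h4 h3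
    · linarith
  have hw : P₂ - O₂ = (T - S₂) + (S₂ - O₂) + s • v := by
    rw [hs]; module
  have hud : ⟪T - S₂, S₂ - O₂⟫ = b ^ 3 / a := by rw [real_inner_comm]; exact hdu
  have hvd : ⟪v, S₂ - O₂⟫ = b * s₁ / a := by rw [real_inner_comm]; exact hdv
  set q : ℝ := b * s₁ / a with hq
  have hs_val : s = -q := by
    have h := hP₂perp
    rw [hw, inner_add_left, inner_add_left, real_inner_smul_left, hperpT, hdv, hvv] at h
    linarith
  have hq2 : q ^ 2 = b ^ 2 * (a ^ 2 - b ^ 2) / a ^ 2 := by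
    rw [hq, div_pow, mul_pow, hs₁sq]
  clear_value q
  have hww0 : ⟪P₂ - O₂, P₂ - O₂⟫ = 2 * b ^ 2 + 2 * (b ^ 3 / a) - q ^ 2 := by
    rw [hw]
    simp only [inner_add_left, inner_add_right, real_inner_smul_left, real_inner_smul_right,
      huu, hdd, hvv, hdu, hud, hdv, hvd, hperpT, hvu, hs_val]
    ring
  have hww : ⟪P₂ - O₂, P₂ - O₂⟫ = (b * (a + b) / a) ^ 2 := by
    rw [hww0, hq2]
    field_simp
    ring
  have hpos : 0 < b * (a + b) / a := by positivity
  have hP₂dist : dist O₂ P₂ = b * (a + b) / a := by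
    have h1 : dist O₂ P₂ ^ 2 = (b * (a + b) / a) ^ 2 := by
      rw [dist_comm, dist_eq_norm, ← real_inner_self_eq_norm_sq, hww]
    nlinarith [dist_nonneg (x := O₂) (y := P₂), h1, hpos]
  have hab : 0 < a + b := by linarith
  have hX : dist O₂ D₂ = 4 * a * b / (a + b) := by
    have hne : b * (a + b) / a ≠ 0 := ne_of_gt hpos
    have h2 : (b * (a + b) / a) * dist O₂ D₂ = R₂ ^ 2 := by rw [← hP₂dist]; exact hD₂inv
    have h3 : dist O₂ D₂ = R₂ ^ 2 / (b * (a + b) / a) := by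
      rw [eq_div_iff hne, mul_comm]; exact h2
    have habne : a + b ≠ 0 := ne_of_gt hab
    have hbne : b ≠ 0 := ne_of_gt hb0
    rw [h3, show R₂ = 2 * b from by rw [hb]; ring]
    field_simp
    ring
  constructor
  · rw [hX, ha, hb]
    have h1 : R₁ / 2 + R₂ / 2 ≠ 0 := by positivity
    field_simp
    ring
  · rw [hX, ha, hb]
    have h1 : R₁ + R₂ ≠ 0 := by positivity
    field_simp
    ring
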